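/- In any algebra (S,*,') satisfying the three axioms, the identity (x' * x) * x''' = x''' holds for all x in S. -/
import Mathlib

theorem stmt (S : Type*) (m : S → S → S) (i : S → S)
    (E1 : ∀ x, m (m x (i x)) x = x)
    (E2 : ∀ x y, m (m x (i x)) (m (i y) y) = m (m (i y) y) (m x (i x)))
    (E3 : ∀ x y z, m (m x y) z = m x (m y (i (i z)))) :
    ∀ x, m (m (i x) x) (i (i (i x))) = i (i (i x)) := by
  intro x
  calc (m (m (i x) x) (i (i (i x))))
      _ = (m (m (i x) x) (m (m (i (i (i x))) (i (i (i (i x))))) (i (i (i x))))) := by conv_lhs => enter [2]; rw [← E1 (i (i (i x)))]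
      _ = (m (m (m (i x) x) (m (i (i (i x))) (i (i (i (i x)))))) (i x)) := by conv_lhs => rw [← E3 (m (i x) x) (m (i (i (i x))) (i (i (i (i x))))) (i x)]
      _ = (m (m (m (m (i x) x) (i (i (i x)))) (i (i x))) (i x)) := by conv_lhs => enter [1]; rw [← E3 (m (i x) x) (i (i (i x))) (i (i x))]
      _ = (m (m (m (m (i x) x) (i (i (i x)))) (m (m (i (i x)) (i (i (i x)))) (i (i x)))) (i x)) := by conv_lhs => enter [1, 2]; rw [← E1 (i (i x))]
      _ = (m (m (m (m (m (i x) x) (i (i (i x)))) (m (i (i x)) (i (i (i x))))) x) (i x)) := by conv_lhs => enter [1]; rw [← E3 (m (m (i x) x) (i (i (i x)))) (m (i (i x)) (i (i (i x)))) x]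
      _ = (m (m (m (m (m (m (i x) x) (i (i (i x)))) (i (i x))) (i x)) x) (i x)) := by conv_lhs => enter [1, 1]; rw [← E3 (m (m (i x) x) (i (i (i x)))) (i (i x)) (i x)]
      _ = (m (m (m (m (m (i x) x) (m (i (i (i x))) (i (i (i (i x)))))) (i x)) x) (i x)) := by conv_lhs => enter [1, 1, 1]; rw [E3 (m (i x) x) (i (i (i x))) (i (i x))]
      _ = (m (m (m (m (i x) x) (m (m (i (i (i x))) (i (i (i (i x))))) (i (i (i x))))) x) (i x)) := by conv_lhs => enter [1, 1]; rw [E3 (m (i x) x) (m (i (i (i x))) (i (i (i (i x))))) (i x)]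
      _ = (m (m (m (m (i x) x) (i (i (i x)))) x) (i x)) := by conv_lhs => enter [1, 1, 2]; rw [E1 (i (i (i x)))]
      _ = (m (m (m (m (m (m (i x) (i (i x))) (i x)) x) (i (i (i x)))) x) (i x)) := by conv_lhs => enter [1, 1, 1, 1]; rw [← E1 (i x)]
      _ = (m (m (m (m (m (i x) (m (i (i x)) (i (i (i x))))) x) (i (i (i x)))) x) (i x)) := by conv_lhs => enter [1, 1, 1, 1]; rw [E3 (i x) (i (i x)) (i x)]
      _ = (m (m (m (m (i x) (m (m (i (i x)) (i (i (i x)))) (i (i x)))) (i (i (i x)))) x) (i x)) := by conv_lhs => enter [1, 1, 1]; rw [E3 (i x) (m (i (i x)) (i (i (i x)))) x]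
      _ = (m (m (m (m (i x) (i (i x))) (i (i (i x)))) x) (i x)) := by conv_lhs => enter [1, 1, 1, 2]; rw [E1 (i (i x))]
      _ = (m (m (m (i x) (i (i x))) (m (i (i (i x))) (i (i x)))) (i x)) := by conv_lhs => enter [1]; rw [E3 (m (i x) (i (i x))) (i (i (i x))) x]
      _ = (m (m (m (i (i (i x))) (i (i x))) (m (i x) (i (i x)))) (i x)) := by conv_lhs => enter [1]; rw [E2 (i x) (i (i x))]
      _ = (m (m (m (m (i (i (i x))) (i (i x))) (i x)) x) (i x)) := by conv_lhs => enter [1]; rw [← E3 (m (i (i (i x))) (i (i x))) (i x) x]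
      _ = (m (m (m (i (i (i x))) (m (i (i x)) (i (i (i x))))) x) (i x)) := by conv_lhs => enter [1, 1]; rw [E3 (i (i (i x))) (i (i x)) (i x)]
      _ = (m (m (i (i (i x))) (m (m (i (i x)) (i (i (i x)))) (i (i x)))) (i x)) := by conv_lhs => enter [1]; rw [E3 (i (i (i x))) (m (i (i x)) (i (i (i x)))) x]
      _ = (m (m (i (i (i x))) (i (i x))) (i x)) := by conv_lhs => enter [1, 2]; rw [E1 (i (i x))]
      _ = (m (m (m (m (i (i (i x))) (i (i (i (i x))))) (i (i (i x)))) (i (i x))) (i x)) := by conv_lhs => enter [1, 1]; rw [← E1 (i (i (i x)))]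
      _ = (m (m (m (i (i (i x))) (i (i (i (i x))))) (m (i (i (i x))) (i (i (i (i x)))))) (i x)) := by conv_lhs => enter [1]; rw [E3 (m (i (i (i x))) (i (i (i (i x))))) (i (i (i x))) (i (i x))]
      _ = (m (m (i (i (i x))) (i (i (i (i x))))) (m (m (i (i (i x))) (i (i (i (i x))))) (i (i (i x))))) := by conv_lhs => rw [E3 (m (i (i (i x))) (i (i (i (i x))))) (m (i (i (i x))) (i (i (i (i x))))) (i x)]
      _ = (m (m (i (i (i x))) (i (i (i (i x))))) (i (i (i x)))) := by conv_lhs => enter [2]; rw [E1 (i (i (i x)))]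
      _ = (i (i (i x))) := by conv_lhs => rw [E1 (i (i (i x)))]
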